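/- There exists a universal constant C > 0 such that for every h ∈ [0, 1), writing α = arccos h ∈ (0, π/2], one has ℰ_h(1 − α/π) ≤ C. -/

import Mathlib

open Real MeasureTheory Filter Topology
open scoped ENNReal NNReal

noncomputable section

/-- `k = min {h, 1}`. -/
def kparam (h : ℝ) : ℝ := min h 1

/-- `α = arccos k ∈ [0, π/2]`. -/
def alphaParam (h : ℝ) : ℝ := Real.arccos (kparam h)

/-- The anisotropy potential `W_h(θ) = (1/2)(cos²θ − 2h cos θ + 2hk − k²)`. -/
def Wpot (h θ : ℝ) : ℝ :=
  (1/2) * ((Real.cos θ)^2 - 2*h*Real.cos θ + 2*h*(kparam h) - (kparam h)^2)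

/-- The set `2πℤ + {−α, α}` of allowed limits at `±∞`. -/
def limSet (h : ℝ) : Set ℝ :=
  {y | ∃ n : ℤ, y = 2*Real.pi*n + alphaParam h ∨ y = 2*Real.pi*n - alphaParam h}

/-- The total energy `E_h(φ)`, valued in `[0, ∞]`:
exchange + anisotropy energy plus the stray-field (homogeneous `H^{1/2}`) energy. -/
def energy (h : ℝ) (φ : ℝ → ℝ) : ℝ≥0∞ :=
  ENNReal.ofReal (1/2) *
      (∫⁻ x : ℝ, ENNReal.ofReal ((deriv φ x)^2 + 2 * Wpot h (φ x))) +
    ENNReal.ofReal (1/(4*Real.pi)) *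
      (∫⁻ s : ℝ, ∫⁻ t : ℝ,
        ENNReal.ofReal ((Real.cos (φ s) - Real.cos (φ t))^2 / (s - t)^2))

/-- An admissible phase: `C¹`, limits at `±∞` in `2πℤ + {−α, α}`, finite energy. -/
def Admissible (h : ℝ) (φ : ℝ → ℝ) : Prop :=
  ContDiff ℝ 1 φ ∧
    (∃ L ∈ limSet h, Tendsto φ atTop (𝓝 L)) ∧
    (∃ L ∈ limSet h, Tendsto φ atBot (𝓝 L)) ∧
    energy h φ < ⊤

/-- The winding number `deg(φ) = (φ(+∞) − φ(−∞))/(2π)`. -/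
def deg (φ : ℝ → ℝ) : ℝ :=
  (limUnder atTop φ - limUnder atBot φ) / (2*Real.pi)

/-- `𝒜_h(d)`: admissible phases of winding number `d`. -/
def AA (h d : ℝ) : Set (ℝ → ℝ) := {φ | Admissible h φ ∧ deg φ = d}

/-- `ℰ_h(d) = inf {E_h(φ) : φ ∈ 𝒜_h(d)}`. -/
def Einf (h d : ℝ) : ℝ≥0∞ := ⨅ φ ∈ AA h d, energy h φ

/-- `D_α = {n + j·α/π : n ∈ ℤ, j ∈ {−1, 0, 1}}`. -/
def Dset (h : ℝ) : Set ℝ :=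
  {d | ∃ n j : ℤ, (j = -1 ∨ j = 0 ∨ j = 1) ∧ d = n + j * alphaParam h / Real.pi}

/-- There is a universal `C > 0` with `ℰ_h(1 − α/π) ≤ C` for all
`h ∈ [0,1)`. -/

private lemma deriv_smoothTransition_eq_zero {x : ℝ} (hx : x ≤ 0 ∨ 1 ≤ x) :
    deriv Real.smoothTransition x = 0 := by
  rcases hx with hx | hx
  · rcases lt_or_eq_of_le hx with hx' | hx'
    · have hev : Real.smoothTransition =ᶠ[𝓝 x] (fun _ => (0:ℝ)) := by
        filter_upwards [Iio_mem_nhds hx'] with y hy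
        exact Real.smoothTransition.zero_of_nonpos hy.le
      rw [hev.deriv_eq]; simp
    · subst hx'
      have hmin : IsLocalMin Real.smoothTransition 0 :=
        Filter.Eventually.of_forall fun y => by
          simpa [Real.smoothTransition.zero] using Real.smoothTransition.nonneg y
      exact hmin.deriv_eq_zero
  · rcases lt_or_eq_of_le hx with hx' | hx'
    · have hev : Real.smoothTransition =ᶠ[𝓝 x] (fun _ => (1:ℝ)) := by
        filter_upwards [Ioi_mem_nhds hx'] with y hy
        exact Real.smoothTransition.one_of_one_le hy.le
      rw [hev.deriv_eq]; simp
    · subst hx'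
      have hmax : IsLocalMax Real.smoothTransition 1 :=
        Filter.Eventually.of_forall fun y => by
          simpa [Real.smoothTransition.one] using Real.smoothTransition.le_one y
      exact hmax.deriv_eq_zero

private lemma exists_bound_deriv_smoothTransition :
    ∃ M : ℝ, 0 ≤ M ∧ ∀ x : ℝ, |deriv Real.smoothTransition x| ≤ M := by
  have hcd : ContDiff ℝ 2 Real.smoothTransition := Real.smoothTransition.contDiff
  have hdc : Continuous (deriv Real.smoothTransition) := hcd.continuous_deriv (by norm_num)
  obtain ⟨M₀, hM₀⟩ := (isCompact_Icc (a := (0:ℝ)) (b := 1)).exists_bound_of_continuousOn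
    hdc.continuousOn
  refine ⟨max M₀ 0, le_max_right _ _, fun x => ?_⟩
  by_cases hx : x ∈ Set.Icc (0:ℝ) 1
  · exact le_trans (by simpa [Real.norm_eq_abs] using hM₀ x hx) (le_max_left _ _)
  · have hx' : x ≤ 0 ∨ 1 ≤ x := by
      rcases le_or_gt x 0 with h' | h'
      · exact Or.inl h'
      rcases le_or_gt 1 x with h'' | h''
      · exact Or.inr h''
      · exact absurd (Set.mem_Icc.mpr ⟨h'.le, h''.le⟩) hx
    rw [deriv_smoothTransition_eq_zero hx']
    simp


set_option maxHeartbeats 1600000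

theorem uniform_bound_one_minus_alpha :
    ∃ C : ℝ, 0 < C ∧ ∀ h : ℝ, 0 ≤ h → h < 1 →
      Einf h (1 - alphaParam h / Real.pi) ≤ ENNReal.ofReal C := by
  obtain ⟨M, hM0, hMb⟩ := exists_bound_deriv_smoothTransition
  set L : ℝ := 2 * Real.pi * M with hL
  have hL0 : 0 ≤ L := by rw [hL]; positivity
  clear_value L
  refine ⟨(L^2 + 4) + 16 * (1 + L^2) * Real.pi + 1, by positivity, ?_⟩
  intro h h0 h1
  have hk : kparam h = h := min_eq_left h1.le
  have hh1 : -1 ≤ h := by linarith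
  set α : ℝ := alphaParam h with hαdef
  have hα0 : 0 ≤ α := Real.arccos_nonneg _
  have hαπ : α ≤ Real.pi := Real.arccos_le_pi _
  have hcosα : Real.cos α = h := by
    rw [hαdef, alphaParam, hk]; exact Real.cos_arccos hh1 h1.le
  set c : ℝ := 2 * Real.pi - 2 * α with hcdef
  have hc0 : 0 ≤ c := by rw [hcdef]; linarith
  have hcle : c ≤ 2 * Real.pi := by rw [hcdef]; linarith
  set φ : ℝ → ℝ := fun x => α + c * Real.smoothTransition x with hφdef
  clear_value φ
  have hψdiff : Differentiable ℝ Real.smoothTransition :=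
    (Real.smoothTransition.contDiff (n := 1)).differentiable (by norm_num)
  have hφdiff : Differentiable ℝ φ := by
    rw [hφdef]
    exact (hψdiff.const_mul c).const_add α
  have hφderiv : ∀ x, deriv φ x = c * deriv Real.smoothTransition x := by
    intro x
    rw [hφdef, deriv_const_add, deriv_const_mul _ (hψdiff x)]
  have hφd_bound : ∀ x, |deriv φ x| ≤ L := by
    intro x
    rw [hφderiv, abs_mul, hL]
    exact mul_le_mul (by rw [abs_of_nonneg hc0]; exact hcle) (hMb x) (abs_nonneg _)
      (by positivity)
  have hφ_low : ∀ x : ℝ, x ≤ 0 → φ x = α := by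
    intro x hx
    rw [hφdef]; simp [Real.smoothTransition.zero_of_nonpos hx]
  have hφ_high : ∀ x : ℝ, 1 ≤ x → φ x = 2 * Real.pi - α := by
    intro x hx
    rw [hφdef]; simp only [Real.smoothTransition.one_of_one_le hx, mul_one]
    rw [hcdef]; ring
  have hcos_out : ∀ x : ℝ, x ≤ 0 ∨ 1 ≤ x → Real.cos (φ x) = h := by
    intro x hx
    rcases hx with hx | hx
    · rw [hφ_low x hx, hcosα]
    · rw [hφ_high x hx, Real.cos_two_pi_sub, hcosα]
  have hW : ∀ θ : ℝ, Wpot h θ = (1/2) * (Real.cos θ - h)^2 := by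
    intro θ; rw [Wpot, hk]; ring
  have hgd : ∀ x : ℝ, HasDerivAt (fun y => Real.cos (φ y))
      (-Real.sin (φ x) * deriv φ x) x :=
    fun x => (Real.hasDerivAt_cos (φ x)).comp x (hφdiff x).hasDerivAt
  have hglip : ∀ s t : ℝ, |Real.cos (φ s) - Real.cos (φ t)| ≤ L * |s - t| := by
    intro s t
    have hb : ∀ x ∈ (Set.univ : Set ℝ), ‖deriv (fun y => Real.cos (φ y)) x‖ ≤ L := by
      intro x _
      rw [(hgd x).deriv, Real.norm_eq_abs, abs_mul, abs_neg]
      calc |Real.sin (φ x)| * |deriv φ x| ≤ 1 * L :=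
        mul_le_mul (abs_sin_le_one (φ x)) (hφd_bound x) (abs_nonneg _) zero_le_one
      _ = L := one_mul L
    have := Convex.norm_image_sub_le_of_norm_deriv_le
      (fun x _ => (hgd x).differentiableAt) hb convex_univ (Set.mem_univ t) (Set.mem_univ s)
    simpa [Real.norm_eq_abs] using this
  have habs2 : ∀ s t : ℝ, |Real.cos (φ s) - Real.cos (φ t)| ≤ 2 := by
    intro s t
    rw [abs_le]
    constructor <;>
      nlinarith [Real.neg_one_le_cos (φ s), Real.cos_le_one (φ s),
        Real.neg_one_le_cos (φ t), Real.cos_le_one (φ t)]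
  -- Term 1
  have hT1 : (∫⁻ x : ℝ, ENNReal.ofReal ((deriv φ x)^2 + 2 * Wpot h (φ x))) ≤
      ENNReal.ofReal (L^2 + 4) := by
    have hpt : ∀ x : ℝ, ENNReal.ofReal ((deriv φ x)^2 + 2 * Wpot h (φ x)) ≤
        Set.indicator (Set.Icc (0:ℝ) 1) (fun _ => ENNReal.ofReal (L^2 + 4)) x := by
      intro x
      by_cases hx : x ∈ Set.Icc (0:ℝ) 1
      · rw [Set.indicator_of_mem hx]
        apply ENNReal.ofReal_le_ofReal
        have h1 := hφd_bound x
        have h2 : (deriv φ x)^2 ≤ L^2 := by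
          nlinarith [abs_nonneg (deriv φ x), sq_abs (deriv φ x)]
        have h3 : Wpot h (φ x) ≤ 2 := by
          rw [hW]
          nlinarith [Real.neg_one_le_cos (φ x), Real.cos_le_one (φ x)]
        linarith
      · rw [Set.indicator_of_notMem hx]
        have hx' : x ≤ 0 ∨ 1 ≤ x := by
          rcases le_or_gt x 0 with h' | h'
          · exact Or.inl h'
          rcases le_or_gt 1 x with h'' | h''
          · exact Or.inr h''
          · exact absurd (Set.mem_Icc.mpr ⟨h'.le, h''.le⟩) hx
        have hd : deriv φ x = 0 := by
          rw [hφderiv, deriv_smoothTransition_eq_zero hx', mul_zero]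
        have hw : Wpot h (φ x) = 0 := by rw [hW, hcos_out x hx']; ring
        simp [hd, hw]
    calc (∫⁻ x : ℝ, ENNReal.ofReal ((deriv φ x)^2 + 2 * Wpot h (φ x)))
        ≤ ∫⁻ x : ℝ, Set.indicator (Set.Icc (0:ℝ) 1)
            (fun _ => ENNReal.ofReal (L^2 + 4)) x := lintegral_mono hpt
      _ = ENNReal.ofReal (L^2 + 4) * volume (Set.Icc (0:ℝ) 1) := by
          rw [lintegral_indicator measurableSet_Icc, setLIntegral_const]
      _ = ENNReal.ofReal (L^2 + 4) := by
          rw [Real.volume_Icc]; norm_num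
  -- Term 2 setup
  set c8 : ℝ := 8 * (1 + L^2) with hc8
  have hc80 : 0 ≤ c8 := by rw [hc8]; positivity
  clear_value c8
  set kk : ℝ → ℝ≥0∞ := fun u => ENNReal.ofReal (c8 * (1 + u^2)⁻¹) with hkk
  clear_value kk
  set χ : ℝ → ℝ≥0∞ := Set.indicator (Set.Icc (0:ℝ) 1) (fun _ => 1) with hχ
  clear_value χ
  have hχtop : ∀ s : ℝ, χ s ≠ ⊤ := by
    intro s
    rw [hχ]
    by_cases hs : s ∈ Set.Icc (0:ℝ) 1 <;> simp [hs]
  have hkmeas : Measurable kk := by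
    rw [hkk]
    exact (((measurable_id.pow_const 2).const_add 1).inv.const_mul c8).ennreal_ofReal
  have hχmeas : Measurable χ := by
    rw [hχ]; exact measurable_const.indicator measurableSet_Icc
  have hχint : (∫⁻ s : ℝ, χ s) = 1 := by
    rw [hχ, lintegral_indicator measurableSet_Icc, setLIntegral_const, one_mul,
      Real.volume_Icc]
    norm_num
  set K : ℝ≥0∞ := ENNReal.ofReal (c8 * Real.pi) with hKdef
  clear_value K
  have hKtop : K ≠ ⊤ := by rw [hKdef]; exact ENNReal.ofReal_ne_top
  have hK : (∫⁻ u : ℝ, kk u) = K := by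
    have hsplit : ∀ u : ℝ, kk u = ENNReal.ofReal c8 * ENNReal.ofReal ((1 + u^2)⁻¹) := by
      intro u; rw [hkk]; exact ENNReal.ofReal_mul hc80
    simp_rw [hsplit]
    rw [lintegral_const_mul' _ _ ENNReal.ofReal_ne_top,
      ← MeasureTheory.ofReal_integral_eq_lintegral_ofReal integrable_inv_one_add_sq
        (Filter.Eventually.of_forall fun u => by positivity),
      integral_univ_inv_one_add_sq, hKdef, ← ENNReal.ofReal_mul hc80]
  have htrans1 : ∀ s : ℝ, (∫⁻ t : ℝ, kk (s - t)) = K := by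
    intro s
    rw [← hK]
    have hmp : MeasurePreserving (fun t : ℝ => s + -t) volume volume :=
      (measurePreserving_add_left volume s).comp (Measure.measurePreserving_neg volume)
    simp_rw [sub_eq_add_neg]
    exact hmp.lintegral_comp hkmeas
  have htrans2 : ∀ t : ℝ, (∫⁻ s : ℝ, kk (s - t)) = K := by
    intro t
    rw [← hK]
    exact (measurePreserving_sub_right volume t).lintegral_comp hkmeas
  have core : ∀ s t : ℝ,
      ENNReal.ofReal ((Real.cos (φ s) - Real.cos (φ t))^2 / (s - t)^2) ≤ kk (s - t) := by
    intro s t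
    have hd2 : |Real.cos (φ s) - Real.cos (φ t)| ≤ 2 := habs2 s t
    have hdl : |Real.cos (φ s) - Real.cos (φ t)| ≤ L * |s - t| := hglip s t
    rw [hkk]
    apply ENNReal.ofReal_le_ofReal
    set d : ℝ := Real.cos (φ s) - Real.cos (φ t) with hd
    set u : ℝ := s - t with hu
    clear_value d u
    rcases eq_or_ne u 0 with hu0 | hu0
    · rw [hu0]
      have hz : d^2 / (0:ℝ)^2 = 0 := by norm_num
      rw [hz]
      exact mul_nonneg hc80 (by positivity)
    · have hu2 : (0:ℝ) < u^2 := by positivity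
      have hrw : c8 * (1 + u^2)⁻¹ = c8 / (1 + u^2) := by ring
      rw [hrw, div_le_div_iff₀ hu2 (by positivity), hc8]
      have hd4 : d^2 ≤ 4 := by
        nlinarith [abs_nonneg d, sq_abs d]
      have hdL : d^2 ≤ L^2 * u^2 := by
        have hmm := mul_self_le_mul_self (abs_nonneg d) hdl
        nlinarith [sq_abs d, sq_abs u]
      linarith [mul_le_mul_of_nonneg_right hd4 (sq_nonneg u), hdL, sq_nonneg u,
        mul_nonneg (sq_nonneg L) (sq_nonneg u)]
  have hpt2 : ∀ s t : ℝ,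
      ENNReal.ofReal ((Real.cos (φ s) - Real.cos (φ t))^2 / (s - t)^2) ≤
        χ s * kk (s - t) + χ t * kk (s - t) := by
    intro s t
    by_cases hs : s ∈ Set.Icc (0:ℝ) 1
    · have h1 : χ s * kk (s - t) = kk (s - t) := by
        rw [hχ, Set.indicator_of_mem hs, one_mul]
      exact (core s t).trans (by rw [h1] at *; exact self_le_add_right _ _)
    · by_cases ht : t ∈ Set.Icc (0:ℝ) 1
      · have h1 : χ t * kk (s - t) = kk (s - t) := by
          rw [hχ, Set.indicator_of_mem ht, one_mul]
        exact (core s t).trans (by rw [h1]; exact self_le_add_left _ _)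
      · have hs' : s ≤ 0 ∨ 1 ≤ s := by
          rcases le_or_gt s 0 with h' | h'
          · exact Or.inl h'
          rcases le_or_gt 1 s with h'' | h''
          · exact Or.inr h''
          · exact absurd (Set.mem_Icc.mpr ⟨h'.le, h''.le⟩) hs
        have ht' : t ≤ 0 ∨ 1 ≤ t := by
          rcases le_or_gt t 0 with h' | h'
          · exact Or.inl h'
          rcases le_or_gt 1 t with h'' | h''
          · exact Or.inr h''
          · exact absurd (Set.mem_Icc.mpr ⟨h'.le, h''.le⟩) ht
        rw [hcos_out s hs', hcos_out t ht']
        simp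
  -- Term 2 bound
  have hT2 : (∫⁻ s : ℝ, ∫⁻ t : ℝ,
      ENNReal.ofReal ((Real.cos (φ s) - Real.cos (φ t))^2 / (s - t)^2)) ≤ K + K := by
    have step1 : (∫⁻ s : ℝ, ∫⁻ t : ℝ,
        ENNReal.ofReal ((Real.cos (φ s) - Real.cos (φ t))^2 / (s - t)^2)) ≤
        ∫⁻ s : ℝ, ∫⁻ t : ℝ, (χ s * kk (s - t) + χ t * kk (s - t)) :=
      lintegral_mono fun s => lintegral_mono fun t => hpt2 s t
    refine step1.trans (le_of_eq ?_)
    have inner : ∀ s : ℝ, (∫⁻ t : ℝ, (χ s * kk (s - t) + χ t * kk (s - t))) =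
        χ s * K + ∫⁻ t : ℝ, χ t * kk (s - t) := by
      intro s
      have m1 : Measurable (fun t : ℝ => χ s * kk (s - t)) :=
        (hkmeas.comp (measurable_const.sub measurable_id)).const_mul _
      rw [lintegral_add_left m1, lintegral_const_mul' _ _ (hχtop s), htrans1 s]
    have hswap : (∫⁻ s : ℝ, ∫⁻ t : ℝ, χ t * kk (s - t)) = K := by
      rw [lintegral_lintegral_swap
        ((hχmeas.comp measurable_snd).mul
          (hkmeas.comp (measurable_fst.sub measurable_snd))).aemeasurable]
      have hin : ∀ t : ℝ, (∫⁻ s : ℝ, χ t * kk (s - t)) = χ t * K := by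
        intro t
        rw [lintegral_const_mul' _ _ (hχtop t), htrans2 t]
      simp_rw [hin]
      rw [lintegral_mul_const' _ _ hKtop, hχint, one_mul]
    calc (∫⁻ s : ℝ, ∫⁻ t : ℝ, (χ s * kk (s - t) + χ t * kk (s - t)))
        = ∫⁻ s : ℝ, (χ s * K + ∫⁻ t : ℝ, χ t * kk (s - t)) := by
          exact lintegral_congr inner
      _ = (∫⁻ s : ℝ, χ s * K) + ∫⁻ s : ℝ, ∫⁻ t : ℝ, χ t * kk (s - t) := by
          exact lintegral_add_left (hχmeas.mul_const K) _
      _ = K + K := by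
          rw [lintegral_mul_const' _ _ hKtop, hχint, one_mul, hswap]
  -- energy bound
  have henergy : energy h φ ≤
      ENNReal.ofReal ((L^2 + 4) + 16 * (1 + L^2) * Real.pi + 1) := by
    rw [energy]
    have hpi1 : (1:ℝ) / (4 * Real.pi) ≤ 1 := by
      rw [div_le_one (by positivity)]
      nlinarith [Real.pi_gt_three]
    have e1 : ENNReal.ofReal (1/2) *
        (∫⁻ x : ℝ, ENNReal.ofReal ((deriv φ x)^2 + 2 * Wpot h (φ x))) ≤
        ENNReal.ofReal (L^2 + 4) := by
      calc ENNReal.ofReal (1/2) *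
          (∫⁻ x : ℝ, ENNReal.ofReal ((deriv φ x)^2 + 2 * Wpot h (φ x)))
          ≤ 1 * ENNReal.ofReal (L^2 + 4) :=
            mul_le_mul' (ENNReal.ofReal_le_one.mpr (by norm_num)) hT1
        _ = ENNReal.ofReal (L^2 + 4) := one_mul _
    have e2 : ENNReal.ofReal (1/(4*Real.pi)) *
        (∫⁻ s : ℝ, ∫⁻ t : ℝ,
          ENNReal.ofReal ((Real.cos (φ s) - Real.cos (φ t))^2 / (s - t)^2)) ≤
        ENNReal.ofReal (16 * (1 + L^2) * Real.pi) := by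
      calc ENNReal.ofReal (1/(4*Real.pi)) *
          (∫⁻ s : ℝ, ∫⁻ t : ℝ,
            ENNReal.ofReal ((Real.cos (φ s) - Real.cos (φ t))^2 / (s - t)^2))
          ≤ 1 * (K + K) := mul_le_mul' (ENNReal.ofReal_le_one.mpr hpi1) hT2
        _ = K + K := one_mul _
        _ = ENNReal.ofReal (c8 * Real.pi + c8 * Real.pi) := by
            rw [hKdef, ← ENNReal.ofReal_add (by positivity) (by positivity)]
        _ = ENNReal.ofReal (16 * (1 + L^2) * Real.pi) := by
            rw [hc8]; congr 1; ring
    calc ENNReal.ofReal (1/2) *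
          (∫⁻ x : ℝ, ENNReal.ofReal ((deriv φ x)^2 + 2 * Wpot h (φ x))) +
        ENNReal.ofReal (1/(4*Real.pi)) *
          (∫⁻ s : ℝ, ∫⁻ t : ℝ,
            ENNReal.ofReal ((Real.cos (φ s) - Real.cos (φ t))^2 / (s - t)^2))
        ≤ ENNReal.ofReal (L^2 + 4) + ENNReal.ofReal (16 * (1 + L^2) * Real.pi) :=
          add_le_add e1 e2
      _ = ENNReal.ofReal ((L^2 + 4) + 16 * (1 + L^2) * Real.pi) :=
          (ENNReal.ofReal_add (by positivity) (by positivity)).symm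
      _ ≤ ENNReal.ofReal ((L^2 + 4) + 16 * (1 + L^2) * Real.pi + 1) :=
          ENNReal.ofReal_le_ofReal (by linarith)
  -- limits and membership
  have htop : Tendsto φ atTop (𝓝 (2 * Real.pi - α)) := by
    apply Tendsto.congr' _ tendsto_const_nhds
    filter_upwards [eventually_ge_atTop (1:ℝ)] with x hx
    exact (hφ_high x hx).symm
  have hbot : Tendsto φ atBot (𝓝 α) := by
    apply Tendsto.congr' _ tendsto_const_nhds
    filter_upwards [eventually_le_atBot (0:ℝ)] with x hx
    exact (hφ_low x hx).symm
  have hmem : φ ∈ AA h (1 - alphaParam h / Real.pi) := by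
    constructor
    · refine ⟨?_, ⟨2 * Real.pi - α, ⟨1, Or.inr (by push_cast; ring)⟩, htop⟩,
        ⟨α, ⟨0, Or.inl (by push_cast; ring)⟩, hbot⟩,
        lt_of_le_of_lt henergy ENNReal.ofReal_lt_top⟩
      rw [hφdef]
      exact contDiff_const.add (contDiff_const.mul Real.smoothTransition.contDiff)
    · rw [deg, htop.limUnder_eq, hbot.limUnder_eq, ← hαdef]
      field_simp
      ring
  have hfin : Einf h (1 - alphaParam h / Real.pi) ≤ energy h φ := by
    rw [Einf]
    exact iInf₂_le φ hmem
  exact hfin.trans henergy
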